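/- For all integers m ≥ 1, 1 ≤ i ≤ m, n ≥ 0 and k ≥ 1, one has A_{n,k}^{(m,i)} = (n! / (m · (i/m)_{n+1})) · B_{n,k−1}^{(m,i)}, where A_{n,k}^{(m,i)} = ∑_{j=0}^{n} (−1)^j · C(n,j) / (m·j + i)^k. -/

import Mathlib

open Finset

/-- The numbers `B_{n,k}^{(m,i)}`: `Bnum m i k n = B_{n,k}^{(m,i)}`, defined by
`B_{n,0} = 1` and `B_{n,k} = ∑_{j=0}^{n} B_{j,k−1}/(m·j+i)` for `k ≥ 1`. -/
noncomputable def Bnum (m i : ℕ) : ℕ → ℕ → ℝ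
  | 0, _ => 1
  | (k+1), n => ∑ j ∈ Finset.range (n + 1), Bnum m i k j / ((m : ℝ) * j + i)

/-- The normalized numbers `b_{n,k}` with parameter `x`. -/
noncomputable def bb (x : ℝ) : ℕ → ℕ → ℝ
  | 0, _ => 1
  | (k+1), n => ∑ j ∈ Finset.range (n + 1), bb x k j / (x + j)

lemma prodP_pos (x : ℝ) (hx : 0 < x) (n : ℕ) :
    0 < ∏ l ∈ range (n+1), (x + l) :=
  Finset.prod_pos fun l _ => by positivity

lemma key1 (n : ℕ) : ∀ x : ℝ, 0 < x →
    ∑ r ∈ range (n+1), (-1:ℝ)^r * (n.choose r) / (x + r)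
      = (n.factorial : ℝ) / ∏ l ∈ range (n+1), (x + l) := by
  induction n with
  | zero => intro x hx; simp
  | succ n ih =>
    intro x hx
    have hx1 : (0:ℝ) < x + 1 := by linarith
    have h1 := ih x hx
    have h2 := ih (x+1) hx1
    have hlast : ∑ r ∈ range (n+2), (-1:ℝ)^r * (n.choose r) / (x + r)
        = ∑ r ∈ range (n+1), (-1:ℝ)^r * (n.choose r) / (x + r) := by
      rw [Finset.sum_range_succ]
      simp [Nat.choose_succ_self]
    have e3 : ∀ s ∈ range (n+1),
        (-1:ℝ)^(s+1) * ((n+1).choose (s+1)) / (x + ((s:ℝ)+1))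
        = (-1:ℝ)^(s+1) * (n.choose (s+1)) / (x + ((s:ℝ)+1))
          - (-1:ℝ)^s * (n.choose s) / ((x+1) + s) := by
      intro s _
      have hc : ((n+1).choose (s+1) : ℝ) = (n.choose s : ℝ) + (n.choose (s+1) : ℝ) := by
        rw [Nat.choose_succ_succ]; push_cast; ring
      rw [hc]
      have hne : (x + ((s:ℝ)+1)) ≠ 0 := by positivity
      have hne2 : ((x+1) + (s:ℝ)) ≠ 0 := by positivity
      field_simp
      ring
    have hsplit : ∑ r ∈ range (n+2), (-1:ℝ)^r * ((n+1).choose r) / (x + r)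
        = (∑ r ∈ range (n+1), (-1:ℝ)^r * (n.choose r) / (x + r))
          - ∑ r ∈ range (n+1), (-1:ℝ)^r * (n.choose r) / ((x+1) + r) := by
      have e1 := Finset.sum_range_succ'
        (fun r => (-1:ℝ)^r * ((n+1).choose r) / (x + r)) (n+1)
      have e2 := Finset.sum_range_succ'
        (fun r => (-1:ℝ)^r * (n.choose r) / (x + r)) (n+1)
      push_cast at e1 e2
      rw [hlast] at e2
      rw [e1, Finset.sum_congr rfl e3, Finset.sum_sub_distrib, e2]
      simp only [pow_zero, Nat.choose_zero_right, Nat.cast_one]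
      ring
    rw [hsplit, h1, h2]
    have hPsucc : ∏ l ∈ range (n+2), (x + l)
        = (∏ l ∈ range (n+1), (x + l)) * (x + ((n:ℝ)+1)) := by
      rw [Finset.prod_range_succ]; push_cast; ring
    have hPshift : (∏ l ∈ range (n+1), ((x+1) + l)) * x
        = ∏ l ∈ range (n+2), (x + l) := by
      have e := Finset.prod_range_succ' (fun l => x + (l:ℝ)) (n+1)
      push_cast at e
      rw [e]
      have e2 : ∏ l ∈ range (n+1), (x + ((l:ℝ)+1)) = ∏ l ∈ range (n+1), ((x+1) + l) := by
        apply Finset.prod_congr rfl; intro l _; push_cast; ring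
      rw [e2]; ring
    have hP1 : (0:ℝ) < ∏ l ∈ range (n+1), (x + l) := prodP_pos x hx n
    have hP2 : (0:ℝ) < ∏ l ∈ range (n+1), ((x+1) + l) := prodP_pos (x+1) hx1 n
    have hxn : (0:ℝ) < x + ((n:ℝ)+1) := by positivity
    rw [hPsucc]
    have hfact : ((n+1).factorial : ℝ) = ((n:ℝ)+1) * n.factorial := by
      rw [Nat.factorial_succ]; push_cast; ring
    rw [hfact]
    have hPP : ∏ l ∈ range (n+1), ((x+1) + l)
        = (∏ l ∈ range (n+1), (x + l)) * (x + ((n:ℝ)+1)) / x := by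
      rw [hPsucc] at hPshift
      rw [eq_div_iff hx.ne']
      exact hPshift
    rw [hPP]
    field_simp
    ring

lemma key2 (x : ℝ) (hx : 0 < x) (r : ℕ) : ∀ n : ℕ,
    ∑ j ∈ range (n+1), (j.choose r : ℝ) * (∏ l ∈ range (j+1), (x + l))
        / ((j.factorial : ℝ) * (x + j))
      = (∏ l ∈ range (n+1), (x + l)) * (n.choose r : ℝ)
        / ((n.factorial : ℝ) * (x + r)) := by
  intro n
  induction n with
  | zero =>
    rcases Nat.eq_zero_or_pos r with h | h
    · subst h; simp
    · have : (0:ℕ).choose r = 0 := Nat.choose_eq_zero_of_lt h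
      simp [this]
  | succ n ihn =>
    rw [Finset.sum_range_succ, ihn]
    have hPn : (0:ℝ) < ∏ l ∈ range (n+1), (x + l) := prodP_pos x hx n
    have hxr : (0:ℝ) < x + (r:ℝ) := by positivity
    have hxn : (0:ℝ) < x + ((n:ℝ)+1) := by positivity
    have hfn : (0:ℝ) < (n.factorial : ℝ) := by positivity
    have hPsucc : ∏ l ∈ range (n+2), (x + l)
        = (∏ l ∈ range (n+1), (x + l)) * (x + ((n:ℝ)+1)) := by
      rw [Finset.prod_range_succ]; push_cast; ring
    have hfact : ((n+1).factorial : ℝ) = ((n:ℝ)+1) * n.factorial := by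
      rw [Nat.factorial_succ]; push_cast; ring
    have hc : ((n:ℝ)+1) * (n.choose r : ℝ)
        = ((n:ℝ)+1-(r:ℝ)) * ((n+1).choose r : ℝ) := by
      rcases le_or_gt r (n+1) with hr | hr
      · have := Nat.choose_mul_succ_eq n r
        have hcast := congrArg (Nat.cast (R := ℝ)) this
        push_cast [Nat.cast_sub hr] at hcast
        linarith
      · have h1 : n.choose r = 0 := Nat.choose_eq_zero_of_lt (by omega)
        have h2 : (n+1).choose r = 0 := Nat.choose_eq_zero_of_lt hr
        simp [h1, h2]
    push_cast
    rw [hPsucc, hfact]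
    have hne1 : ((n.factorial : ℝ) * (x + r)) ≠ 0 := by positivity
    field_simp
    linear_combination hc

lemma mainS (x : ℝ) (hx : 0 < x) : ∀ k n : ℕ,
    ∑ r ∈ range (n+1), (-1:ℝ)^r * (n.choose r) / (x + r)^(k+1)
      = ((n.factorial : ℝ) / ∏ l ∈ range (n+1), (x + l)) * bb x k n := by
  intro k
  induction k with
  | zero => intro n; simpa [bb] using key1 n x hx
  | succ k ih =>
    intro n
    have hterm : ∀ j ∈ range (n+1),
        bb x k j / (x + j)
          = ∑ r ∈ range (n+1), ((-1:ℝ)^r * (j.choose r) / (x + r)^(k+1))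
              * ((∏ l ∈ range (j+1), (x + l)) / ((j.factorial:ℝ) * (x + j))) := by
      intro j hj
      have hPj : (0:ℝ) < ∏ l ∈ range (j+1), (x + l) := prodP_pos x hx j
      have hxj : (0:ℝ) < x + (j:ℝ) := by positivity
      have hfj : (0:ℝ) < (j.factorial : ℝ) := by positivity
      have hbb : bb x k j
          = (∑ r ∈ range (j+1), (-1:ℝ)^r * (j.choose r) / (x + r)^(k+1))
            * (∏ l ∈ range (j+1), (x + l)) / (j.factorial:ℝ) := by
        rw [ih j]
        field_simp
      have hext : ∑ r ∈ range (n+1),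
          ((-1:ℝ)^r * (j.choose r) / (x + r)^(k+1))
            * ((∏ l ∈ range (j+1), (x + l)) / ((j.factorial:ℝ) * (x + j)))
          = ∑ r ∈ range (j+1),
          ((-1:ℝ)^r * (j.choose r) / (x + r)^(k+1))
            * ((∏ l ∈ range (j+1), (x + l)) / ((j.factorial:ℝ) * (x + j))) := by
        refine (Finset.sum_subset (Finset.range_subset_range.2 ?_) ?_).symm
        · simp at hj; omega
        · intro r _ hr
          have : j < r := by simpa using hr
          simp [Nat.choose_eq_zero_of_lt this]
      rw [hbb, hext, ← Finset.sum_mul]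
      field_simp
    have inner : ∀ r ∈ range (n+1),
        ∑ j ∈ range (n+1),
            ((-1:ℝ)^r * (j.choose r) / (x + r)^(k+1))
            * ((∏ l ∈ range (j+1), (x + l)) / ((j.factorial:ℝ) * (x + j)))
          = ((-1:ℝ)^r / (x + r)^(k+1))
            * ((∏ l ∈ range (n+1), (x + l)) * (n.choose r : ℝ)
                / ((n.factorial:ℝ) * (x + r))) := by
      intro r _
      rw [← key2 x hx r n, Finset.mul_sum]
      apply Finset.sum_congr rfl
      intro j _
      have h1 : (x + (j:ℝ)) ≠ 0 := by positivity
      have h2 : (x + (r:ℝ)) ≠ 0 := by positivity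
      have h3 : ((j.factorial:ℝ)) ≠ 0 := by positivity
      field_simp
    have step1 : bb x (k+1) n = ∑ j ∈ range (n+1), bb x k j / (x + j) := rfl
    rw [step1, Finset.sum_congr rfl hterm, Finset.sum_comm,
      Finset.sum_congr rfl inner, Finset.mul_sum]
    apply Finset.sum_congr rfl
    intro r _
    have hPn : (0:ℝ) < ∏ l ∈ range (n+1), (x + l) := prodP_pos x hx n
    have hxr : (0:ℝ) < x + (r:ℝ) := by positivity
    have hfn : (0:ℝ) < (n.factorial : ℝ) := by positivity
    field_simp
    ring

lemma Bnum_eq (m i : ℕ) (hm : 1 ≤ m) (hi : 1 ≤ i) : ∀ k n : ℕ,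
    Bnum m i k n = bb ((i:ℝ)/m) k n / (m:ℝ)^k := by
  have h1 : (0:ℝ) < (i:ℝ) := by exact_mod_cast hi
  have h2 : (0:ℝ) < (m:ℝ) := by exact_mod_cast hm
  intro k
  induction k with
  | zero => intro n; simp [Bnum, bb]
  | succ k ih =>
    intro n
    rw [show Bnum m i (k+1) n = ∑ j ∈ range (n+1), Bnum m i k j / ((m:ℝ)*j + i) from rfl]
    rw [show bb ((i:ℝ)/m) (k+1) n
        = ∑ j ∈ range (n+1), bb ((i:ℝ)/m) k j / ((i:ℝ)/m + j) from rfl]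
    rw [Finset.sum_div]
    apply Finset.sum_congr rfl
    intro j _
    rw [ih j]
    have hmx : ((m:ℝ)*j + i) = (m:ℝ) * ((i:ℝ)/m + j) := by field_simp; ring
    have hx : (0:ℝ) < (i:ℝ)/m + j := by positivity
    rw [hmx]
    field_simp
    ring

/-- For all integers `m ≥ 1`, `1 ≤ i ≤ m`, `n ≥ 0` and `k ≥ 1`,
`A_{n,k}^{(m,i)} = (n!/(m·(i/m)_{n+1})) · B_{n,k−1}^{(m,i)}`, where
`A_{n,k}^{(m,i)} = ∑_{j=0}^{n} (−1)^j C(n,j)/(m·j+i)^k`. -/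
theorem stmt1 (m i : ℕ) (hm : 1 ≤ m) (hi1 : 1 ≤ i) (him : i ≤ m) (n k : ℕ) (hk : 1 ≤ k) :
    (∑ j ∈ Finset.range (n + 1), (-1 : ℝ) ^ j * (n.choose j) / ((m : ℝ) * j + i) ^ k)
      = ((n.factorial : ℝ) / ((m : ℝ) * ∏ j ∈ Finset.range (n + 1), ((i : ℝ) / m + j)))
        * Bnum m i (k - 1) n := by
  obtain ⟨k, rfl⟩ : ∃ k', k = k' + 1 := ⟨k - 1, by omega⟩
  simp only [Nat.add_sub_cancel]
  have h1 : (0:ℝ) < (i:ℝ) := by exact_mod_cast hi1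
  have h2 : (0:ℝ) < (m:ℝ) := by exact_mod_cast hm
  set x : ℝ := (i:ℝ)/m with hxdef
  have hx : 0 < x := by positivity
  have hL : ∀ j ∈ range (n+1),
      (-1:ℝ)^j * (n.choose j) / ((m:ℝ)*j + i)^(k+1)
        = ((-1:ℝ)^j * (n.choose j) / (x + j)^(k+1)) * ((m:ℝ)^(k+1))⁻¹ := by
    intro j _
    have hmx : ((m:ℝ)*j + i) = (m:ℝ) * (x + j) := by rw [hxdef]; field_simp; ring
    have hxj : (0:ℝ) < x + (j:ℝ) := by positivity
    rw [hmx, mul_pow]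
    field_simp
  rw [Finset.sum_congr rfl hL, ← Finset.sum_mul, mainS x hx k n, Bnum_eq m i hm hi1 k n]
  have hP : (0:ℝ) < ∏ l ∈ range (n+1), (x + l) := prodP_pos x hx n
  rw [← hxdef]
  field_simp
  ring
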